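/- Let w : ℝ → (0,∞) be a continuous 2π-periodic function that is angle-separable and satisfies w(α) = w(α + π) for every α ∈ ℝ. Then w is a constant function. -/
import Mathlib


/-- A continuous, positive, 2π-periodic, angle-separable function `w`
taking equal values at antipodal angles (`w(α) = w(α+π)` for all `α`) is constant. -/
theorem stmt_4 (w : ℝ → ℝ)
    (hpos : ∀ t, 0 < w t)
    (hcont : Continuous w)
    (hper : ∀ t, w (t + 2 * Real.pi) = w t)
    (hsep : ∀ α : ℝ,
      (∀ θ ∈ Set.Ioo (0 : ℝ) Real.pi, w (α - θ) ≤ w (α + θ)) ∨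
      (∀ θ ∈ Set.Ioo (0 : ℝ) Real.pi, w (α + θ) ≤ w (α - θ)))
    (hanti : ∀ α : ℝ, w α = w (α + Real.pi)) :
    ∀ s t : ℝ, w s = w t := by
  have hπpos := Real.pi_pos
  have E : ∀ α : ℝ, ∀ θ ∈ Set.Ioo (0:ℝ) Real.pi, w (α + θ) = w (α - θ) := by
    intro α θ hθ
    have hθ' : Real.pi - θ ∈ Set.Ioo (0:ℝ) Real.pi := by
      constructor
      · linarith [hθ.2]
      · linarith [hθ.1]
    have e1 : w (α + θ) = w (α - (Real.pi - θ)) := by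
      have := hanti (α + θ - Real.pi)
      have h2 : α + θ - Real.pi + Real.pi = α + θ := by ring
      rw [h2] at this
      rw [← this]
      ring_nf
    have e2 : w (α - θ) = w (α + (Real.pi - θ)) := by
      have := hanti (α - θ)
      rw [this]
      ring_nf
    rcases hsep α with h | h
    · refine le_antisymm ?_ (h θ hθ)
      calc w (α + θ) = w (α - (Real.pi - θ)) := e1
        _ ≤ w (α + (Real.pi - θ)) := h _ hθ'
        _ = w (α - θ) := e2.symm
    · refine le_antisymm (h θ hθ) ?_
      calc w (α - θ) = w (α + (Real.pi - θ)) := e2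
        _ ≤ w (α - (Real.pi - θ)) := h _ hθ'
        _ = w (α + θ) := e1.symm
  have hperπ : ∀ x : ℝ, ∀ k : ℤ, w (x + k * Real.pi) = w x := by
    intro x k
    have hP : Function.Periodic w Real.pi := fun y => (hanti y).symm
    have := (hP.int_mul k) x
    simpa [mul_comm] using this
  intro s t
  set k : ℤ := ⌊(t - s) / Real.pi⌋ with hk
  set d : ℝ := t - s - k * Real.pi with hdd
  have hd0 : 0 ≤ d := by
    have := Int.sub_floor_div_mul_nonneg (t - s) hπpos
    simpa [hdd, hk] using this
  have hd1 : d < Real.pi := by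
    have := Int.sub_floor_div_mul_lt (t - s) hπpos
    simpa [hdd, hk] using this
  have ht : w t = w (s + d) := by
    have : t = (s + d) + k * Real.pi := by rw [hdd]; ring
    rw [this, hperπ]
  rcases eq_or_lt_of_le hd0 with h0 | h0
  · rw [ht, ← h0, add_zero]
  · rw [ht]
    have hE := E (s + d / 2) (d / 2) ⟨by linarith, by linarith⟩
    have e1 : s + d / 2 + d / 2 = s + d := by ring
    have e2 : s + d / 2 - d / 2 = s := by ring
    rw [e1, e2] at hE
    exact hE.symm
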